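/- Let L = L₀ ⊕ L₁ be a complex Leibniz superalgebra with dim L₀ = n, dim L₁ = m, and nilindex equal to n + m + 1. Then either (i) m = 0 and L₀ has a basis e₁, …, e_n with [e_i, e₁] = e_{i+1} for 1 ≤ i ≤ n−1 and all other products of basis elements equal to zero; or (ii) m ≠ 0 and L has a basis e₁, …, e_{n+m} with e_i ∈ L₁ for i odd and e_i ∈ L₀ for i even, such that [e_i, e₁] = e_{i+1} for 1 ≤ i ≤ n+m−1, [e_i, e₂] = 2e_{i+2} for 1 ≤ i ≤ n+m−2, and all other products of basis elements are equal to zero. -/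

import Mathlib

/-- A complex Leibniz superalgebra: a complex vector space `V` with an internal
direct-sum decomposition `V = L0 ⊕ L1`, a bilinear bracket respecting the
`ℤ/2`-grading and satisfying the Leibniz superidentity (for homogeneous
second and third arguments). -/
structure LeibnizSuper (V : Type) [AddCommGroup V] [Module ℂ V] where
  bracket : V →ₗ[ℂ] V →ₗ[ℂ] V
  L0 : Submodule ℂ V
  L1 : Submodule ℂ V
  compl : IsCompl L0 L1
  g00 : ∀ a ∈ L0, ∀ b ∈ L0, bracket a b ∈ L0
  g01 : ∀ a ∈ L0, ∀ b ∈ L1, bracket a b ∈ L1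
  g10 : ∀ a ∈ L1, ∀ b ∈ L0, bracket a b ∈ L1
  g11 : ∀ a ∈ L1, ∀ b ∈ L1, bracket a b ∈ L0
  super_jacobi : ∀ (x : V) (α β : Bool) (y z : V),
    y ∈ (if α then L1 else L0) → z ∈ (if β then L1 else L0) →
    bracket x (bracket y z) =
      bracket (bracket x y) z - (if α && β then (-1 : ℂ) else 1) • bracket (bracket x z) y

variable {V : Type} [AddCommGroup V] [Module ℂ V]

/-- Descending central series of a Leibniz superalgebra:
`dcs S k` is `L^{k+1}`, i.e. `dcs S 0 = L¹ = L`. -/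
def LeibnizSuper.dcs (S : LeibnizSuper V) : ℕ → Submodule ℂ V
  | 0 => ⊤
  | k + 1 => Submodule.span ℂ {v | ∃ a ∈ S.dcs k, ∃ b : V, v = S.bracket a b}

/-- Descending central series of the even part `L₀` (a Leibniz algebra):
`dcs0 S k` is `L₀^{k+1}`, i.e. `dcs0 S 0 = L₀`. -/
def LeibnizSuper.dcs0 (S : LeibnizSuper V) : ℕ → Submodule ℂ V
  | 0 => S.L0
  | k + 1 => Submodule.span ℂ {v | ∃ a ∈ S.dcs0 k, ∃ b ∈ S.L0, v = S.bracket a b}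

/-- `G` generates the superalgebra: the smallest linear subspace containing `G`
and closed under the bracket is all of `V`. -/
def LeibnizSuper.generates (S : LeibnizSuper V) (G : Set V) : Prop :=
  ∀ p : Submodule ℂ V, G ⊆ p → (∀ a ∈ p, ∀ b ∈ p, S.bracket a b ∈ p) → p = ⊤

/-- The nilindex: the minimal `s ≥ 1` with `L^s = 0`. -/
noncomputable def LeibnizSuper.nilindex (S : LeibnizSuper V) : ℕ :=
  sInf {s | 1 ≤ s ∧ S.dcs (s - 1) = ⊥}

/-- The characteristic-sequence condition `n₁ ≤ n - 2`, `m₁ ≤ m - 1`: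
for every `x ∈ L₀ \ L₀²` the right multiplication operator `R_x`
satisfies `R_x^{n-2} = 0` on `L₀` and `R_x^{m-1} = 0` on `L₁`. -/
def LeibnizSuper.charSeqLE (S : LeibnizSuper V) (n m : ℕ) : Prop :=
  ∀ x ∈ S.L0, x ∉ S.dcs0 1 →
    (∀ v ∈ S.L0, ((S.bracket.flip x : Module.End ℂ V) ^ (n - 2)) v = 0) ∧
    (∀ v ∈ S.L1, ((S.bracket.flip x : Module.End ℂ V) ^ (m - 1)) v = 0)

namespace MaxNilAux
open Submodule Module

variable {V : Type} [AddCommGroup V] [Module ℂ V]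

/-- The chain `e 0 = x`, `e (k+1) = [e k, x]`. -/
def ech (S : LeibnizSuper V) (x : V) : ℕ → V
  | 0 => x
  | k + 1 => S.bracket (ech S x k) x

variable (S : LeibnizSuper V)

lemma bracket_mem_dcs {a : V} {k : ℕ} (ha : a ∈ S.dcs k) (b : V) :
    S.bracket a b ∈ S.dcs (k + 1) :=
  Submodule.subset_span ⟨a, ha, b, rfl⟩

lemma ech_mem (x : V) : ∀ k, ech S x k ∈ S.dcs k
  | 0 => Submodule.mem_top
  | k + 1 => bracket_mem_dcs S (ech_mem x k) x

lemma dcs_succ_le : ∀ k, S.dcs (k+1) ≤ S.dcs k := by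
  intro k
  induction k with
  | zero => exact le_top
  | succ k ih =>
    refine Submodule.span_le.mpr ?_
    rintro v ⟨a, ha, b, rfl⟩
    exact Submodule.subset_span ⟨a, ih ha, b, rfl⟩

lemma dcs_stab {k : ℕ} (h : S.dcs (k+1) = S.dcs k) : ∀ j, S.dcs (k + j) = S.dcs k := by
  intro j
  induction j with
  | zero => rfl
  | succ j ih =>
    calc S.dcs (k + j + 1)
        = Submodule.span ℂ {v | ∃ a ∈ S.dcs (k + j), ∃ b : V, v = S.bracket a b} := rfl
      _ = Submodule.span ℂ {v | ∃ a ∈ S.dcs k, ∃ b : V, v = S.bracket a b} := by rw [ih]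
      _ = S.dcs (k+1) := rfl
      _ = S.dcs k := h

lemma decomp (y : V) : ∃ y0 ∈ S.L0, ∃ y1 ∈ S.L1, y = y0 + y1 := by
  have h : y ∈ S.L0 ⊔ S.L1 := by
    rw [codisjoint_iff.mp S.compl.codisjoint]; trivial
  obtain ⟨y0, h0, y1, h1, hsum⟩ := Submodule.mem_sup.mp h
  exact ⟨y0, h0, y1, h1, hsum.symm⟩

lemma jac_mem {a : V} {k : ℕ} (ha : a ∈ S.dcs k) (α β : Bool) {y z : V}
    (hy : y ∈ (if α then S.L1 else S.L0)) (hz : z ∈ (if β then S.L1 else S.L0)) :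
    S.bracket a (S.bracket y z) ∈ S.dcs (k + 2) := by
  rw [S.super_jacobi a α β y z hy hz]
  exact sub_mem (bracket_mem_dcs S (bracket_mem_dcs S ha y) z)
    (Submodule.smul_mem _ _ (bracket_mem_dcs S (bracket_mem_dcs S ha z) y))

/-- Lemma B : `[dcs k, dcs 1] ⊆ dcs (k+2)`. -/
lemma bracket_dcs1_mem {a w : V} {k : ℕ} (ha : a ∈ S.dcs k) (hw : w ∈ S.dcs 1) :
    S.bracket a w ∈ S.dcs (k + 2) := by
  have hle : S.dcs 1 ≤ (S.dcs (k+2)).comap (S.bracket a) := by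
    refine Submodule.span_le.mpr ?_
    rintro v ⟨y, -, z, rfl⟩
    obtain ⟨y0, hy0, y1, hy1, rfl⟩ := decomp S y
    obtain ⟨z0, hz0, z1, hz1, rfl⟩ := decomp S z
    have hexp : S.bracket (y0 + y1) (z0 + z1) =
        S.bracket y0 z0 + S.bracket y0 z1 + S.bracket y1 z0 + S.bracket y1 z1 := by
      simp only [map_add, LinearMap.add_apply]; abel
    simp only [SetLike.mem_coe, Submodule.mem_comap]
    rw [hexp, map_add, map_add, map_add]
    refine add_mem (add_mem (add_mem ?_ ?_) ?_) ?_
    · exact jac_mem S ha false false (by simpa using hy0) (by simpa using hz0)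
    · exact jac_mem S ha false true (by simpa using hy0) (by simpa using hz1)
    · exact jac_mem S ha true false (by simpa using hy1) (by simpa using hz0)
    · exact jac_mem S ha true true (by simpa using hy1) (by simpa using hz1)
  exact hle hw

/-- Lemma A : `dcs k ⊆ ⟨e k⟩ + dcs (k+1)`. -/
lemma dcs_le_span (x : V) (htop : (⊤ : Submodule ℂ V) ≤ Submodule.span ℂ {x} ⊔ S.dcs 1) :
    ∀ k, S.dcs k ≤ Submodule.span ℂ {ech S x k} ⊔ S.dcs (k+1) := by
  intro k
  induction k with
  | zero => exact htop
  | succ k ih =>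
    refine Submodule.span_le.mpr ?_
    rintro v ⟨a, ha, b, rfl⟩
    obtain ⟨y, hy, a', ha', rfl⟩ := Submodule.mem_sup.mp (ih ha)
    obtain ⟨c, rfl⟩ := Submodule.mem_span_singleton.mp hy
    obtain ⟨u, hu, w, hw, hb⟩ := Submodule.mem_sup.mp (htop (Submodule.mem_top (x := b)))
    obtain ⟨d, rfl⟩ := Submodule.mem_span_singleton.mp hu
    rw [← hb]
    have heq : S.bracket (c • ech S x k + a') (d • x + w)
        = (c * d) • S.bracket (ech S x k) x + (c • S.bracket (ech S x k) w
          + (d • S.bracket a' x + S.bracket a' w)) := by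
      simp only [map_add, map_smul, LinearMap.add_apply, LinearMap.smul_apply]
      module
    simp only [SetLike.mem_coe]
    rw [heq]
    refine add_mem (Submodule.mem_sup_left (Submodule.smul_mem _ _
      (Submodule.subset_span rfl))) (add_mem ?_ (add_mem ?_ ?_))
    · exact Submodule.mem_sup_right (Submodule.smul_mem _ _
        (bracket_dcs1_mem S (ech_mem S x k) hw))
    · exact Submodule.mem_sup_right (Submodule.smul_mem _ _ (bracket_mem_dcs S ha' x))
    · exact Submodule.mem_sup_right (bracket_mem_dcs S ha' w)

lemma top_le_span_ech (x : V) (htop : (⊤ : Submodule ℂ V) ≤ Submodule.span ℂ {x} ⊔ S.dcs 1)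
    (N : ℕ) (hbot : S.dcs N = ⊥) :
    (⊤ : Submodule ℂ V) ≤ Submodule.span ℂ (Set.range fun i : Fin N => ech S x i) := by
  set P := Submodule.span ℂ (Set.range fun i : Fin N => ech S x i) with hP
  have key : ∀ k, k ≤ N → (⊤ : Submodule ℂ V) ≤ P ⊔ S.dcs k := by
    intro k
    induction k with
    | zero => intro _; rw [show S.dcs 0 = ⊤ from rfl]; exact le_sup_right
    | succ k ih =>
      intro hk
      refine (ih (by omega)).trans ?_
      refine sup_le le_sup_left ?_
      refine (dcs_le_span S x htop k).trans ?_
      refine sup_le ?_ le_sup_right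
      refine le_trans ?_ le_sup_left
      rw [hP]
      refine Submodule.span_mono ?_
      rintro v rfl
      exact ⟨⟨k, by omega⟩, rfl⟩
  have := key N le_rfl
  rwa [hbot, sup_bot_eq] at this

lemma ech_eq_zero (x : V) (N : ℕ) (hbot : S.dcs N = ⊥) : ∀ k, N ≤ k → ech S x k = 0 := by
  intro k hk
  induction k, hk using Nat.le_induction with
  | base =>
    have := ech_mem S x N
    rw [hbot] at this
    simpa using this
  | succ k hk ih =>
    show S.bracket (ech S x k) x = 0
    rw [ih]
    simp

/-- All chain elements lie in `L0` when `x ∈ L0`. -/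
lemma ech_mem_L0 {x : V} (hx : x ∈ S.L0) : ∀ k, ech S x k ∈ S.L0
  | 0 => hx
  | k + 1 => S.g00 _ (ech_mem_L0 hx k) _ hx

/-- Parity of the chain when `x ∈ L1`. -/
lemma ech_parity {x : V} (hx : x ∈ S.L1) :
    ∀ k, (k % 2 = 0 → ech S x k ∈ S.L1) ∧ (k % 2 = 1 → ech S x k ∈ S.L0) := by
  intro k
  induction k with
  | zero => exact ⟨fun _ => hx, fun h => by omega⟩
  | succ k ih =>
    by_cases hk : k % 2 = 0
    · exact ⟨fun h => by omega, fun _ => S.g11 _ (ih.1 hk) _ hx⟩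
    · exact ⟨fun _ => S.g01 _ (ih.2 (by omega)) _ hx, fun h => by omega⟩

/-- `[y, e 1] = 2[[y,x],x]` when `x ∈ L1`. -/
lemma bracket_ech_one {x : V} (hx : x ∈ S.L1) (y : V) :
    S.bracket y (ech S x 1) = (2 : ℂ) • S.bracket (S.bracket y x) x := by
  have h := S.super_jacobi y true true x x (by simpa using hx) (by simpa using hx)
  rw [show ech S x 1 = S.bracket x x from rfl, h]
  norm_num [two_smul]

/-- `[y, e j] = 0` for `j ≥ 2` when `x ∈ L1`. -/
lemma bracket_ech_super {x : V} (hx : x ∈ S.L1) : ∀ j, ∀ y : V,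
    S.bracket y (ech S x (j + 2)) = 0 := by
  intro j
  induction j with
  | zero =>
    intro y
    have h1 : ech S x 1 ∈ S.L0 := S.g11 x hx x hx
    have h := S.super_jacobi y false true (ech S x 1) x (by simpa using h1) (by simpa using hx)
    rw [show ech S x 2 = S.bracket (ech S x 1) x from rfl, h,
      bracket_ech_one S hx y, bracket_ech_one S hx (S.bracket y x)]
    simp [two_smul]
  | succ j ih =>
    intro y
    by_cases hp : (j + 2) % 2 = 0
    · have h1 : ech S x (j+2) ∈ S.L1 := (ech_parity S hx (j+2)).1 hp
      have h := S.super_jacobi y true true (ech S x (j+2)) x (by simpa using h1)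
        (by simpa using hx)
      rw [show ech S x (j+3) = S.bracket (ech S x (j+2)) x from rfl, h, ih y, ih (S.bracket y x)]
      simp
    · have h1 : ech S x (j+2) ∈ S.L0 := (ech_parity S hx (j+2)).2 (by omega)
      have h := S.super_jacobi y false true (ech S x (j+2)) x (by simpa using h1)
        (by simpa using hx)
      rw [show ech S x (j+3) = S.bracket (ech S x (j+2)) x from rfl, h, ih y, ih (S.bracket y x)]
      simp

/-- `[y, e j] = 0` for `j ≥ 1` when `x ∈ L0`. -/
lemma bracket_ech_even {x : V} (hx : x ∈ S.L0) : ∀ j, ∀ y : V,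
    S.bracket y (ech S x (j + 1)) = 0 := by
  intro j
  induction j with
  | zero =>
    intro y
    have h := S.super_jacobi y false false x x (by simpa using hx) (by simpa using hx)
    rw [show ech S x 1 = S.bracket x x from rfl, h]
    simp
  | succ j ih =>
    intro y
    have h1 : ech S x (j+1) ∈ S.L0 := ech_mem_L0 S hx (j+1)
    have h := S.super_jacobi y false false (ech S x (j+1)) x (by simpa using h1)
      (by simpa using hx)
    rw [show ech S x (j+2) = S.bracket (ech S x (j+1)) x from rfl, h, ih y, ih (S.bracket y x)]
    simp

end MaxNilAux


/-- Theorem 2.1 of the paper: classification of complex Leibniz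
superalgebras of maximal nilindex `n + m + 1`.  Either `m = 0` and `L = L₀` has
a basis `e₁, …, e_n` (indexed here by `Fin n`, so `e₁ = e 0`) with
`[e_i, e₁] = e_{i+1}` and all other products zero; or `m ≠ 0` and `L` has a
basis `e₁, …, e_{n+m}` alternating between `L₁` (odd positions) and `L₀` (even
positions) with `[e_i, e₁] = e_{i+1}`, `[e_i, e₂] = 2 e_{i+2}` and all other
products of basis elements zero. -/
theorem leibnizSuper_maximal_nilindex_classification
    {V : Type} [AddCommGroup V] [Module ℂ V] [FiniteDimensional ℂ V]
    (S : LeibnizSuper V) (n m : ℕ)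
    (hdim0 : Module.finrank ℂ S.L0 = n) (hdim1 : Module.finrank ℂ S.L1 = m)
    (hnil : S.nilindex = n + m + 1) :
    (m = 0 ∧ ∃ e : Module.Basis (Fin n) ℂ V, (∀ i : Fin n, e i ∈ S.L0) ∧
      ∀ i j : Fin n, S.bracket (e i) (e j) =
        if h : (j : ℕ) = 0 ∧ (i : ℕ) + 1 < n then e ⟨(i : ℕ) + 1, h.2⟩ else 0) ∨
    (m ≠ 0 ∧ ∃ e : Module.Basis (Fin (n + m)) ℂ V,
      (∀ k : Fin (n + m), if (k : ℕ) % 2 = 0 then e k ∈ S.L1 else e k ∈ S.L0) ∧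
      ∀ i j : Fin (n + m), S.bracket (e i) (e j) =
        if h : (j : ℕ) = 0 ∧ (i : ℕ) + 1 < n + m then e ⟨(i : ℕ) + 1, h.2⟩
        else if h' : (j : ℕ) = 1 ∧ (i : ℕ) + 2 < n + m then
          (2 : ℂ) • e ⟨(i : ℕ) + 2, h'.2⟩
        else 0) := by
  classical
  open MaxNilAux Module Submodule in
  have hVrank : finrank ℂ V = n + m := by
    rw [← Submodule.finrank_add_eq_of_isCompl S.compl, hdim0, hdim1]
  rw [LeibnizSuper.nilindex] at hnil
  by_cases hNM : n + m = 0
  · left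
    have hm : m = 0 := by omega
    have hn : n = 0 := by omega
    subst hm hn
    exact ⟨rfl, Module.finBasisOfFinrankEq ℂ V hVrank, fun i => i.elim0, fun i => i.elim0⟩
  · -- nilindex consequences
    have hA : Set.Nonempty {s | 1 ≤ s ∧ S.dcs (s-1) = ⊥} := by
      by_contra h
      rw [Set.not_nonempty_iff_eq_empty] at h
      rw [h, Nat.sInf_empty] at hnil
      omega
    have hbot : S.dcs (n+m) = ⊥ := by
      have hmem := Nat.sInf_mem hA
      rw [hnil] at hmem
      simpa using hmem.2
    have hne : ∀ k, k < n + m → S.dcs k ≠ ⊥ := by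
      intro k hk hcon
      have hmem : (k+1) ∈ {s | 1 ≤ s ∧ S.dcs (s-1) = ⊥} := ⟨by omega, by simpa using hcon⟩
      have hle := Nat.sInf_le hmem
      rw [hnil] at hle
      omega
    have hstrict : ∀ k, k < n + m → S.dcs (k+1) < S.dcs k := by
      intro k hk
      refine lt_of_le_of_ne (MaxNilAux.dcs_succ_le S k) (fun heq => ?_)
      have h2 := MaxNilAux.dcs_stab S heq (n+m-k)
      rw [show k + (n+m-k) = n+m by omega, hbot] at h2
      exact hne k hk h2.symm
    have hrank : ∀ d k, k + d = n + m → d ≤ finrank ℂ (S.dcs k) := by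
      intro d
      induction d with
      | zero => intro k _; omega
      | succ d ih =>
        intro k hkd
        have h1 := ih (k+1) (by omega)
        have h2 := Submodule.finrank_lt_finrank_of_lt (hstrict k (by omega))
        omega
    have key : ∀ u : V, u ∉ S.dcs 1 →
        (⊤ : Submodule ℂ V) ≤ Submodule.span ℂ {u} ⊔ S.dcs 1 := by
      intro u hu
      have hlt : S.dcs 1 < Submodule.span ℂ {u} ⊔ S.dcs 1 := by
        refine lt_of_le_of_ne le_sup_right (fun h => hu ?_)
        rw [h]
        exact Submodule.mem_sup_left (Submodule.subset_span rfl)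
      have h1 := hrank (n+m-1) 1 (by omega)
      have h2 := Submodule.finrank_lt_finrank_of_lt hlt
      have h3 := Submodule.finrank_le (Submodule.span ℂ {u} ⊔ S.dcs 1)
      rw [hVrank] at h3
      have h4 : finrank ℂ (Submodule.span ℂ {u} ⊔ S.dcs 1 : Submodule ℂ V)
          = finrank ℂ V := by rw [hVrank]; omega
      exact (Submodule.eq_top_of_finrank_eq h4).symm.le
    obtain ⟨v, hv⟩ : ∃ v : V, v ∉ S.dcs 1 := by
      by_contra h
      push_neg at h
      have htop1 : S.dcs 1 = S.dcs 0 := eq_top_iff.mpr fun w _ => h w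
      have h2 := MaxNilAux.dcs_stab S (k := 0) htop1 (n+m)
      rw [zero_add, hbot] at h2
      exact hne 0 (by omega) h2.symm
    obtain ⟨v0, hv0, v1, hv1, hveq⟩ := MaxNilAux.decomp S v
    by_cases hm : m = 0
    · left
      refine ⟨hm, ?_⟩
      subst hm
      have hL1 : S.L1 = ⊥ := Submodule.finrank_eq_zero.mp hdim1
      have hL0 : S.L0 = ⊤ := by
        have hc := codisjoint_iff.mp S.compl.codisjoint
        rwa [hL1, sup_bot_eq] at hc
      have htop := key v hv
      have hspan := MaxNilAux.top_le_span_ech S v htop (n+0) hbot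
      have hcard : Fintype.card (Fin (n+0)) = Module.finrank ℂ V := by
        simpa using hVrank.symm
      refine ⟨basisOfTopLeSpanOfCardEqFinrank _ hspan hcard, ?_, ?_⟩
      · intro i
        simp only [coe_basisOfTopLeSpanOfCardEqFinrank]
        rw [hL0]; trivial
      · intro i j
        simp only [coe_basisOfTopLeSpanOfCardEqFinrank]
        by_cases hj : (j : ℕ) = 0
        · by_cases hi : (i : ℕ) + 1 < n
          · rw [dif_pos ⟨hj, hi⟩, hj]
            rfl
          · rw [dif_neg (fun h => hi h.2), hj]
            calc S.bracket (MaxNilAux.ech S v ↑i) (MaxNilAux.ech S v 0)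
                = MaxNilAux.ech S v ((i:ℕ)+1) := rfl
              _ = 0 := MaxNilAux.ech_eq_zero S v (n+0) hbot _ (by have := i.2; omega)
        · rw [dif_neg (fun h => hj h.1)]
          rw [show (j:ℕ) = ((j:ℕ)-1)+1 by omega]
          exact MaxNilAux.bracket_ech_even S (by rw [hL0]; trivial) _ _
    · right
      refine ⟨hm, ?_⟩
      have hv1' : v1 ∉ S.dcs 1 := by
        intro hmem1
        have hv0' : v0 ∉ S.dcs 1 := fun h0 => hv (hveq ▸ add_mem h0 hmem1)
        have htop := key v0 hv0'
        have hspan := MaxNilAux.top_le_span_ech S v0 htop (n+m) hbot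
        have hsub : Submodule.span ℂ (Set.range fun i : Fin (n+m) => MaxNilAux.ech S v0 ↑i)
            ≤ S.L0 := by
          refine Submodule.span_le.mpr ?_
          rintro w ⟨i, rfl⟩
          exact MaxNilAux.ech_mem_L0 S hv0 _
        have hL0top : S.L0 = ⊤ := top_le_iff.mp (hspan.trans hsub)
        have hL1bot : S.L1 = ⊥ := by
          have hd := disjoint_iff.mp S.compl.disjoint
          rwa [hL0top, top_inf_eq] at hd
        rw [hL1bot] at hdim1
        simp at hdim1
        exact hm hdim1.symm
      have htop := key v1 hv1'
      have hspan := MaxNilAux.top_le_span_ech S v1 htop (n+m) hbot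
      have hcard : Fintype.card (Fin (n+m)) = Module.finrank ℂ V := by
        simpa using hVrank.symm
      refine ⟨basisOfTopLeSpanOfCardEqFinrank _ hspan hcard, ?_, ?_⟩
      · intro k
        simp only [coe_basisOfTopLeSpanOfCardEqFinrank]
        by_cases hk : (k : ℕ) % 2 = 0
        · rw [if_pos hk]; exact (MaxNilAux.ech_parity S hv1 _).1 hk
        · rw [if_neg hk]; exact (MaxNilAux.ech_parity S hv1 _).2 (by omega)
      · intro i j
        simp only [coe_basisOfTopLeSpanOfCardEqFinrank]
        by_cases hj0 : (j : ℕ) = 0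
        · by_cases hi : (i : ℕ) + 1 < n + m
          · rw [dif_pos ⟨hj0, hi⟩, hj0]
            rfl
          · rw [dif_neg (fun h => hi h.2), dif_neg (fun h' => by omega), hj0]
            calc S.bracket (MaxNilAux.ech S v1 ↑i) (MaxNilAux.ech S v1 0)
                = MaxNilAux.ech S v1 ((i:ℕ)+1) := rfl
              _ = 0 := MaxNilAux.ech_eq_zero S v1 (n+m) hbot _ (by have := i.2; omega)
        · by_cases hj1 : (j : ℕ) = 1
          · by_cases hi : (i : ℕ) + 2 < n + m
            · rw [dif_neg (fun h => by omega), dif_pos ⟨hj1, hi⟩, hj1,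
                MaxNilAux.bracket_ech_one S hv1]
              rfl
            · rw [dif_neg (fun h => by omega), dif_neg (fun h' => hi h'.2), hj1,
                MaxNilAux.bracket_ech_one S hv1]
              have hre : S.bracket (S.bracket (MaxNilAux.ech S v1 ↑i) v1) v1
                  = MaxNilAux.ech S v1 ((i:ℕ)+2) := rfl
              rw [hre, MaxNilAux.ech_eq_zero S v1 (n+m) hbot _ (by omega), smul_zero]
          · rw [dif_neg (fun h => hj0 h.1), dif_neg (fun h' => hj1 h'.1)]
            rw [show (j:ℕ) = ((j:ℕ)-2)+2 by omega]
            exact MaxNilAux.bracket_ech_super S hv1 _ _
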